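/- arXiv:0802.3523 — 9 statements merged into one kernel-verified Lean document; each statement's English description precedes it below -/
import Mathlib

section
/- Let A, B, C be nonempty finite subsets of an abelian group G with 1 ∈ C. Then either ABC = AB or |ABC| ≥ |A| + |B|. -/
open Pointwise Finset

private lemma key_kneser {G : Type*} [CommGroup G] [DecidableEq G] :
    ∀ n (A B : Finset G) (c : G), B.card ≤ n → ¬(A * B * {c} ⊆ A * B) →
      A.card + B.card ≤ ((A * B) ∪ (A * B * {c})).card := by
  intro n
  induction n with
  | zero =>
    intro A B c hBn hsub
    exfalso
    rw [Nat.le_zero, Finset.card_eq_zero] at hBn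
    subst hBn
    simp at hsub
  | succ n ih =>
    intro A B c hBn hsub
    obtain ⟨x, hx, hxAB⟩ := Finset.not_subset.1 hsub
    obtain ⟨y, hy, z, hz, rfl⟩ := Finset.mem_mul.1 hx
    rw [Finset.mem_singleton] at hz
    rw [hz] at hx hxAB
    clear hz
    obtain ⟨a0, ha0, b0, hb0, rfl⟩ := Finset.mem_mul.1 hy
    by_cases hcase : ∀ a ∈ A, ∀ b ∈ B, a * (b0⁻¹ * b) ∈ A
    · -- translation-invariance case: {a0} * B * {c} is disjoint from A * B
      have hinv : ∀ a ∈ A, ∀ b ∈ B, a * (b⁻¹ * b0) ∈ A := by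
        intro a ha b hb
        have himg : A.image (· * (b0⁻¹ * b)) = A := by
          apply Finset.eq_of_subset_of_card_le
          · intro x hx
            obtain ⟨a', ha', rfl⟩ := Finset.mem_image.1 hx
            exact hcase a' ha' b hb
          · rw [Finset.card_image_of_injective _ (mul_left_injective _)]
        have : a ∈ A.image (· * (b0⁻¹ * b)) := by rw [himg]; exact ha
        obtain ⟨a', ha', heq⟩ := Finset.mem_image.1 this
        have : a * (b⁻¹ * b0) = a' := by rw [← heq]; group
        rw [this]; exact ha'
      have hdisj : ∀ b ∈ B, a0 * b * c ∉ A * B := by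
        intro b hb hmem
        obtain ⟨a', ha', b', hb', heq⟩ := Finset.mem_mul.1 hmem
        apply hxAB
        have h2 : a' * (b0⁻¹ * b') * (b⁻¹ * b0) ∈ A :=
          hinv _ (hcase a' ha' b' hb') b hb
        have h3 : a' * (b0⁻¹ * b') * (b⁻¹ * b0) * b0 = a0 * b0 * c := by
          calc a' * (b0⁻¹ * b') * (b⁻¹ * b0) * b0 = (a' * b') * b⁻¹ * b0 := by
                rw [mul_comm b0⁻¹ b', mul_comm b⁻¹ b0]; group
          _ = (a0 * b * c) * b⁻¹ * b0 := by rw [heq]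
          _ = a0 * b0 * c := by
                rw [mul_assoc a0 b c, mul_comm b c, mul_assoc a0 b0 c, mul_comm b0 c]; group
        exact h3 ▸ Finset.mul_mem_mul h2 hb0
      have hXsub : ({a0} : Finset G) * B * {c} ⊆ A * B * {c} :=
        Finset.mul_subset_mul_right (Finset.mul_subset_mul_right
          (Finset.singleton_subset_iff.2 ha0))
      have hXdisj : Disjoint (A * B) (({a0} : Finset G) * B * {c}) := by
        rw [Finset.disjoint_right]
        intro x hxX hxAB'
        obtain ⟨y, hy, z, hz, rfl⟩ := Finset.mem_mul.1 hxX
        rw [Finset.mem_singleton] at hz; subst hz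
        obtain ⟨a', ha', b, hb, rfl⟩ := Finset.mem_mul.1 hy
        rw [Finset.mem_singleton] at ha'; subst ha'
        exact hdisj b hb hxAB'
      have hXcard : (({a0} : Finset G) * B * {c}).card = B.card := by
        rw [Finset.mul_singleton, Finset.singleton_mul, Finset.card_smul_finset,
          Finset.card_smul_finset]
      have hABcard : A.card ≤ (A * B).card := by
        have : A * {b0} ⊆ A * B := Finset.mul_subset_mul_left (Finset.singleton_subset_iff.2 hb0)
        have hc : (A * {b0}).card = A.card := by
          rw [Finset.mul_singleton, Finset.card_smul_finset]
        exact hc ▸ Finset.card_le_card this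
      calc A.card + B.card ≤ (A * B).card + (({a0} : Finset G) * B * {c}).card := by
            rw [hXcard]; exact Nat.add_le_add_right hABcard _
        _ = ((A * B) ∪ (({a0} : Finset G) * B * {c})).card :=
            (Finset.card_union_of_disjoint hXdisj).symm
        _ ≤ ((A * B) ∪ (A * B * {c})).card :=
            Finset.card_le_card (Finset.union_subset_union_right hXsub)
    · -- Dyson transform case
      push_neg at hcase
      obtain ⟨a1, ha1, b1, hb1, hnb⟩ := hcase
      set e : G := a1 * b0⁻¹ with he
      set A' : Finset G := A ∪ e • B with hA'
      set B' : Finset G := B ∩ e⁻¹ • A with hB'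
      have hb0B' : b0 ∈ B' := by
        rw [hB', Finset.mem_inter]
        refine ⟨hb0, Finset.mem_inv_smul_finset_iff.2 ?_⟩
        have : e • b0 = a1 := by rw [he]; simp [smul_eq_mul]
        rw [this]; exact ha1
      have hb1B' : b1 ∉ B' := by
        rw [hB', Finset.mem_inter]
        rintro ⟨-, h⟩
        rw [Finset.mem_inv_smul_finset_iff] at h
        apply hnb
        have : e • b1 = a1 * (b0⁻¹ * b1) := by rw [he]; simp [smul_eq_mul, mul_assoc]
        rwa [this] at h
      have hcard' : B'.card < B.card :=
        Finset.card_lt_card ⟨Finset.inter_subset_left, fun h => hb1B' (h hb1)⟩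
      have hsub' : A' * B' ⊆ A * B := by
        intro x hx
        obtain ⟨u, hu, v, hv, rfl⟩ := Finset.mem_mul.1 hx
        rw [hB', Finset.mem_inter] at hv
        obtain ⟨hvB, hvA⟩ := hv
        rw [Finset.mem_inv_smul_finset_iff] at hvA
        rw [hA', Finset.mem_union] at hu
        rcases hu with hu | hu
        · exact Finset.mul_mem_mul hu hvB
        · obtain ⟨b, hb, rfl⟩ := Finset.mem_smul_finset.1 hu
          have : (e • b) * v = (e • v) * b := by simp [smul_eq_mul, mul_right_comm]
          rw [this]
          exact Finset.mul_mem_mul hvA hb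
      have hne' : ¬(A' * B' * {c} ⊆ A' * B') := by
        intro h
        apply hxAB
        apply hsub'
        apply h
        exact Finset.mul_mem_mul (Finset.mul_mem_mul (Finset.mem_union_left _ ha0) hb0B')
          (Finset.mem_singleton_self c)
      have hinter : A ∩ e • B = e • B' := by
        rw [hB', Finset.smul_finset_inter, smul_inv_smul, Finset.inter_comm]
      have hcards : A'.card + B'.card = A.card + B.card := by
        have h1 := Finset.card_union_add_card_inter A (e • B)
        rw [hinter, Finset.card_smul_finset, Finset.card_smul_finset] at h1
        rw [hA']
        omega
      have hih := ih A' B' c (by omega) hne'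
      calc A.card + B.card = A'.card + B'.card := hcards.symm
        _ ≤ ((A' * B') ∪ (A' * B' * {c})).card := hih
        _ ≤ ((A * B) ∪ (A * B * {c})).card :=
            Finset.card_le_card (Finset.union_subset_union hsub'
              (Finset.mul_subset_mul_right hsub'))

theorem stmt_2 {G : Type*} [CommGroup G] [DecidableEq G]
    (A B C : Finset G) (hA : A.Nonempty) (hB : B.Nonempty) (hC : C.Nonempty)
    (h1 : (1 : G) ∈ C) :
    A * B * C = A * B ∨ A.card + B.card ≤ (A * B * C).card := by
  by_cases h : A * B * C = A * B
  · exact Or.inl h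
  · right
    have hABsub : A * B ⊆ A * B * C := by
      intro x hx
      have := Finset.mul_mem_mul hx h1
      rwa [mul_one] at this
    have hex : ∃ x ∈ A * B * C, x ∉ A * B := by
      by_contra hcon
      push_neg at hcon
      exact h (Finset.Subset.antisymm hcon hABsub)
    obtain ⟨x, hx, hxn⟩ := hex
    obtain ⟨y, hy, cc, hcc, rfl⟩ := Finset.mem_mul.1 hx
    have hne : ¬(A * B * {cc} ⊆ A * B) := by
      rw [Finset.not_subset]
      exact ⟨y * cc, Finset.mul_mem_mul hy (Finset.mem_singleton_self cc), hxn⟩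
    have hkey := key_kneser (B.card) A B cc le_rfl hne
    refine hkey.trans (Finset.card_le_card ?_)
    apply Finset.union_subset hABsub
    exact Finset.mul_subset_mul_left (Finset.singleton_subset_iff.2 hcc)
end

section
/- Let K ⊆ L be a field extension with K in the center of L, let A, B be finite-dimensional K-subspaces of L, and let x ∈ L be nonzero. Set A' = A + Ax and B' = B ∩ x⁻¹B. Then the K-span of A'B' is contained in the K-span of AB. -/
theorem stmt_3 {K L : Type*} [Field K] [DivisionRing L] [Algebra K L]
    (A B : Submodule K L) (hA : FiniteDimensional K A) (hB : FiniteDimensional K B)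
    (x : L) (hx : x ≠ 0) :
    (A ⊔ A.map (LinearMap.mulRight K x)) * (B ⊓ B.map (LinearMap.mulLeft K x⁻¹)) ≤ A * B := by
  rw [Submodule.sup_mul]
  refine sup_le (mul_le_mul' le_rfl inf_le_left) ?_
  refine Submodule.mul_le.2 ?_
  rintro m hm n hn
  obtain ⟨a, ha, rfl⟩ := hm
  obtain ⟨b, hb, rfl⟩ := hn.2
  simp only [LinearMap.mulRight_apply, LinearMap.mulLeft_apply]
  rw [mul_assoc a x, ← mul_assoc x, mul_inv_cancel₀ hx, one_mul]
  exact Submodule.mul_mem_mul ha hb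
end

section
/- Let K be a commutative field and L a purely transcendental (more precisely: containing no finite-dimensional subfield other than K) field extension of K containing K in its center. Then for any nonzero finite-dimensional K-subspaces A, B of L, dim_K⟨AB⟩ ≥ dim_K A + dim_K B − 1. -/
section KempermanLinear

variable {K L : Type*} [Field K] [DivisionRing L] [Algebra K L]

open Module Submodule

/-- Left multiplication by a nonzero element, as a `K`-linear equivalence. -/
noncomputable def mleE (K : Type*) {L : Type*} [Field K] [DivisionRing L] [Algebra K L]
    (u : L) (hu : u ≠ 0) : L ≃ₗ[K] L where
  toFun x := u * x
  invFun x := u⁻¹ * x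
  map_add' := mul_add u
  map_smul' k x := mul_smul_comm k u x
  left_inv x := inv_mul_cancel_left₀ hu x
  right_inv x := mul_inv_cancel_left₀ hu x

/-- Right multiplication by a nonzero element, as a `K`-linear equivalence. -/
noncomputable def mreE (K : Type*) {L : Type*} [Field K] [DivisionRing L] [Algebra K L]
    (u : L) (hu : u ≠ 0) : L ≃ₗ[K] L where
  toFun x := x * u
  invFun x := x * u⁻¹
  map_add' x y := add_mul x y u
  map_smul' k x := smul_mul_assoc k x u
  left_inv x := mul_inv_cancel_right₀ hu x
  right_inv x := inv_mul_cancel_right₀ hu x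

@[simp] theorem mleE_coe_apply (u : L) (hu : u ≠ 0) (x : L) :
    (mleE K u hu : L →ₗ[K] L) x = u * x := rfl

@[simp] theorem mreE_coe_apply (u : L) (hu : u ≠ 0) (x : L) :
    (mreE K u hu : L →ₗ[K] L) x = x * u := rfl

theorem fin_mul (A B : Submodule K L) [hA : FiniteDimensional K A]
    [hB : FiniteDimensional K B] : FiniteDimensional K ↥(A * B) :=
  Module.Finite.iff_fg.2 (Submodule.FG.mul (Module.Finite.iff_fg.1 hA)
    (Module.Finite.iff_fg.1 hB))

theorem fin_map (X : Submodule K L) (e : L ≃ₗ[K] L) [FiniteDimensional K X] :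
    FiniteDimensional K ↥(X.map (e : L →ₗ[K] L)) :=
  LinearEquiv.finiteDimensional (e.submoduleMap X)

theorem ne_bot_of_one_mem {X : Submodule K L} (h1 : (1 : L) ∈ X) : X ≠ ⊥ :=
  fun h => one_ne_zero ((Submodule.mem_bot K).1 (h ▸ h1))

theorem one_le_finrank {X : Submodule K L} (h1 : (1 : L) ∈ X) [FiniteDimensional K X] :
    1 ≤ finrank K X := by
  have h : (K ∙ (1 : L)) ≤ X := (Submodule.span_singleton_le_iff_mem _ _).2 h1
  have h2 := Submodule.finrank_mono (M := L) (R := K) h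
  rwa [finrank_span_singleton (one_ne_zero (α := L))] at h2

theorem le_mul_right' (A B : Submodule K L) (h1B : (1 : L) ∈ B) : A ≤ A * B := fun x hx => by
  simpa using Submodule.mul_mem_mul hx h1B

theorem le_mul_left' (A B : Submodule K L) (h1A : (1 : L) ∈ A) : B ≤ A * B := fun x hx => by
  simpa using Submodule.mul_mem_mul h1A hx

/-- If a nonzero finite-dimensional subspace is stable under right multiplication by `e`,
then `e` spans a finite-dimensional subfield, hence `e ∈ K`. -/
theorem stab_right
    (htrans : ∀ H : Submodule K L, (1 : L) ∈ H → (∀ a ∈ H, ∀ b ∈ H, a * b ∈ H) →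
      FiniteDimensional K H → H = (1 : Submodule K L))
    (X : Submodule K L) (hX : X ≠ ⊥) (hfin : FiniteDimensional K X)
    {e : L} (he : ∀ x ∈ X, x * e ∈ X) : e ∈ (1 : Submodule K L) := by
  obtain ⟨x₀, hx₀X, hx₀⟩ := Submodule.exists_mem_ne_zero_of_ne_bot hX
  set H : Submodule K L := Submodule.span K (Set.range fun n : ℕ => e ^ n) with hHdef
  have hpow : ∀ n : ℕ, e ^ n ∈ H := fun n => Submodule.subset_span ⟨n, rfl⟩
  have hXpow : ∀ n : ℕ, x₀ * e ^ n ∈ X := by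
    intro n
    induction n with
    | zero => simpa using hx₀X
    | succ n ih => rw [pow_succ, ← mul_assoc]; exact he _ ih
  have hmulH : ∀ a ∈ H, ∀ b ∈ H, a * b ∈ H := by
    have hle : H * H ≤ H := by
      rw [hHdef, Submodule.span_mul_span]
      refine Submodule.span_le.2 ?_
      rintro z ⟨x, ⟨i, rfl⟩, y, ⟨j, rfl⟩, rfl⟩
      exact Submodule.subset_span ⟨i + j, by simpa using pow_add e i j⟩
    exact fun a ha b hb => hle (Submodule.mul_mem_mul ha hb)
  have hinj : Function.Injective (LinearMap.mulLeft K x₀) := fun x y hxy => by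
    simp only [LinearMap.mulLeft_apply] at hxy
    exact mul_left_cancel₀ hx₀ hxy
  have hmaple : H.map (LinearMap.mulLeft K x₀) ≤ X := by
    rw [hHdef, Submodule.map_span]
    refine Submodule.span_le.2 ?_
    rintro z ⟨w, ⟨n, rfl⟩, rfl⟩
    simpa using hXpow n
  haveI : FiniteDimensional K ↥(H.map (LinearMap.mulLeft K x₀)) :=
    Submodule.finiteDimensional_of_le hmaple
  haveI hfH : FiniteDimensional K H :=
    (Submodule.equivMapOfInjective _ hinj H).symm.finiteDimensional
  have hHeq : H = 1 := htrans H (Submodule.subset_span ⟨0, pow_zero e⟩) hmulH hfH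
  have hmem : e ∈ H := by simpa using hpow 1
  rwa [hHeq] at hmem

/-- Left-stability version. -/
theorem stab_left
    (htrans : ∀ H : Submodule K L, (1 : L) ∈ H → (∀ a ∈ H, ∀ b ∈ H, a * b ∈ H) →
      FiniteDimensional K H → H = (1 : Submodule K L))
    (X : Submodule K L) (hX : X ≠ ⊥) (hfin : FiniteDimensional K X)
    {e : L} (he : ∀ x ∈ X, e * x ∈ X) : e ∈ (1 : Submodule K L) := by
  obtain ⟨x₀, hx₀X, hx₀⟩ := Submodule.exists_mem_ne_zero_of_ne_bot hX
  set H : Submodule K L := Submodule.span K (Set.range fun n : ℕ => e ^ n) with hHdef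
  have hpow : ∀ n : ℕ, e ^ n ∈ H := fun n => Submodule.subset_span ⟨n, rfl⟩
  have hXpow : ∀ n : ℕ, e ^ n * x₀ ∈ X := by
    intro n
    induction n with
    | zero => simpa using hx₀X
    | succ n ih => rw [pow_succ', mul_assoc]; exact he _ ih
  have hmulH : ∀ a ∈ H, ∀ b ∈ H, a * b ∈ H := by
    have hle : H * H ≤ H := by
      rw [hHdef, Submodule.span_mul_span]
      refine Submodule.span_le.2 ?_
      rintro z ⟨x, ⟨i, rfl⟩, y, ⟨j, rfl⟩, rfl⟩
      exact Submodule.subset_span ⟨i + j, by simpa using pow_add e i j⟩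
    exact fun a ha b hb => hle (Submodule.mul_mem_mul ha hb)
  have hinj : Function.Injective (LinearMap.mulRight K x₀) := fun x y hxy => by
    simp only [LinearMap.mulRight_apply] at hxy
    exact mul_right_cancel₀ hx₀ hxy
  have hmaple : H.map (LinearMap.mulRight K x₀) ≤ X := by
    rw [hHdef, Submodule.map_span]
    refine Submodule.span_le.2 ?_
    rintro z ⟨w, ⟨n, rfl⟩, rfl⟩
    simpa using hXpow n
  haveI : FiniteDimensional K ↥(H.map (LinearMap.mulRight K x₀)) :=
    Submodule.finiteDimensional_of_le hmaple
  haveI hfH : FiniteDimensional K H :=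
    (Submodule.equivMapOfInjective _ hinj H).symm.finiteDimensional
  have hHeq : H = 1 := htrans H (Submodule.subset_span ⟨0, pow_zero e⟩) hmulH hfH
  have hmem : e ∈ H := by simpa using hpow 1
  rwa [hHeq] at hmem

/-- First transform: `(A + Au)(B ∩ vB) ⊆ AB` when `uv = 1`. -/
theorem T_sup_inf (A B : Submodule K L) {u v : L} (hu : u ≠ 0) (hv : v ≠ 0)
    (huv : u * v = 1) :
    (A ⊔ A.map (mreE K u hu : L →ₗ[K] L)) * (B ⊓ B.map (mleE K v hv : L →ₗ[K] L)) ≤ A * B := by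
  refine Submodule.mul_le.2 fun x hx y hy => ?_
  obtain ⟨hyB, hy2⟩ := Submodule.mem_inf.1 hy
  obtain ⟨b, hb, rfl⟩ := Submodule.mem_map.1 hy2
  obtain ⟨a, haA, z, hz, rfl⟩ := Submodule.mem_sup.1 hx
  obtain ⟨a', ha', rfl⟩ := Submodule.mem_map.1 hz
  simp only [mleE_coe_apply, mreE_coe_apply] at hyB ⊢
  rw [add_mul]
  refine Submodule.add_mem _ (Submodule.mul_mem_mul haA hyB) ?_
  have hcalc : a' * u * (v * b) = a' * b := by
    rw [mul_assoc, ← mul_assoc u, huv, one_mul]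
  rw [hcalc]
  exact Submodule.mul_mem_mul ha' hb

/-- Second transform: `(A ∩ Au)(B + vB) ⊆ AB` when `uv = 1`. -/
theorem T_inf_sup (A B : Submodule K L) {u v : L} (hu : u ≠ 0) (hv : v ≠ 0)
    (huv : u * v = 1) :
    (A ⊓ A.map (mreE K u hu : L →ₗ[K] L)) * (B ⊔ B.map (mleE K v hv : L →ₗ[K] L)) ≤ A * B := by
  refine Submodule.mul_le.2 fun x hx y hy => ?_
  obtain ⟨hxA, hx2⟩ := Submodule.mem_inf.1 hx
  obtain ⟨a', ha', rfl⟩ := Submodule.mem_map.1 hx2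
  obtain ⟨b, hbB, z, hz, rfl⟩ := Submodule.mem_sup.1 hy
  obtain ⟨b', hb', rfl⟩ := Submodule.mem_map.1 hz
  simp only [mleE_coe_apply, mreE_coe_apply] at hxA ⊢
  rw [mul_add]
  refine Submodule.add_mem _ (Submodule.mul_mem_mul hxA hbB) ?_
  have hcalc : a' * u * (v * b') = a' * b' := by
    rw [mul_assoc, ← mul_assoc u, huv, one_mul]
  rw [hcalc]
  exact Submodule.mul_mem_mul ha' hb'

theorem scale_left (A B : Submodule K L) {u : L} (hu : u ≠ 0) :
    (A.map (mleE K u hu : L →ₗ[K] L)) * B ≤ (A * B).map (mleE K u hu : L →ₗ[K] L) := by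
  refine Submodule.mul_le.2 fun x hx y hy => ?_
  obtain ⟨a, ha, rfl⟩ := Submodule.mem_map.1 hx
  exact Submodule.mem_map.2 ⟨a * y, Submodule.mul_mem_mul ha hy, by
    simp only [mleE_coe_apply]; rw [mul_assoc]⟩

theorem scale_right (A B : Submodule K L) {u : L} (hu : u ≠ 0) :
    A * (B.map (mreE K u hu : L →ₗ[K] L)) ≤ (A * B).map (mreE K u hu : L →ₗ[K] L) := by
  refine Submodule.mul_le.2 fun x hx y hy => ?_
  obtain ⟨b, hb, rfl⟩ := Submodule.mem_map.1 hy
  exact Submodule.mem_map.2 ⟨x * b, Submodule.mul_mem_mul hx hb, by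
    simp only [mreE_coe_apply]; rw [mul_assoc]⟩

/-- Main inductive lemma (Kemperman transforms). -/
theorem kemperman_main
    (htrans : ∀ H : Submodule K L, (1 : L) ∈ H → (∀ a ∈ H, ∀ b ∈ H, a * b ∈ H) →
      FiniteDimensional K H → H = (1 : Submodule K L)) :
    ∀ d : ℕ, ∀ A B : Submodule K L, (1 : L) ∈ A → (1 : L) ∈ B →
      FiniteDimensional K A → FiniteDimensional K B →
      2 * finrank K ↥(A * B) ≤ finrank K A + finrank K B + d →
      finrank K A + finrank K B ≤ finrank K ↥(A * B) + 1 := by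
  intro d
  induction d using Nat.strong_induction_on with
  | _ d IH =>
  -- M phase : assumes dim A < dim B, strong induction on dim A
  have Mph : ∀ a : ℕ, ∀ A B : Submodule K L, (1 : L) ∈ A → (1 : L) ∈ B →
      FiniteDimensional K A → FiniteDimensional K B →
      finrank K A = a → finrank K A < finrank K B →
      2 * finrank K ↥(A * B) ≤ finrank K A + finrank K B + d →
      finrank K A + finrank K B ≤ finrank K ↥(A * B) + 1 := by
    intro a
    induction a using Nat.strong_induction_on with
    | _ a IHa =>
    intro A B h1A h1B hAf hBf hra hab hd
    haveI := hAf; haveI := hBf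
    haveI hABf : FiniteDimensional K ↥(A * B) := fin_mul A B
    have hr1 : finrank K (1 : Submodule K L) = 1 := by
      rw [Submodule.one_eq_span]; exact finrank_span_singleton (one_ne_zero (α := L))
    have hle1 : (1 : Submodule K L) ≤ A := by
      rw [Submodule.one_eq_span]
      exact (Submodule.span_singleton_le_iff_mem _ _).2 h1A
    by_cases hA1 : finrank K A ≤ 1
    · -- base case: A = K
      have hAeq : (1 : Submodule K L) = A :=
        Submodule.eq_of_le_of_finrank_le hle1 (by omega)
      have h5 : A * B = B := by rw [← hAeq, one_mul]
      have h6 : 1 ≤ finrank K A := one_le_finrank h1A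
      rw [h5]
      omega
    · push_neg at hA1
      have hlt1 : (1 : Submodule K L) < A := by
        refine lt_of_le_of_ne hle1 (fun h => ?_)
        rw [← h, hr1] at hA1
        omega
      obtain ⟨f, hfA, hf1⟩ := SetLike.exists_of_lt hlt1
      have hf0 : f ≠ 0 := fun h => hf1 (by rw [h]; exact zero_mem _)
      set Bf := B.map (mleE K f hf0 : L →ₗ[K] L) with hBfdef
      set Afi := A.map (mreE K f⁻¹ (inv_ne_zero hf0) : L →ₗ[K] L) with hAfidef
      haveI hfinBf : FiniteDimensional K Bf := fin_map B _
      haveI hfinAfi : FiniteDimensional K Afi := fin_map A _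
      haveI : FiniteDimensional K ↥(A ⊓ Afi) := Submodule.finiteDimensional_of_le inf_le_left
      haveI : FiniteDimensional K ↥(B ⊓ Bf) := Submodule.finiteDimensional_of_le inf_le_left
      haveI : FiniteDimensional K ↥(B ⊔ Bf) := Submodule.finiteDimensional_sup B Bf
      haveI : FiniteDimensional K ↥(A ⊔ Afi) := Submodule.finiteDimensional_sup A Afi
      have hrBf : finrank K Bf = finrank K B := LinearEquiv.finrank_map_eq _ _
      have hrAfi : finrank K Afi = finrank K A := LinearEquiv.finrank_map_eq _ _
      have hsumA : finrank K ↥(A ⊔ Afi) + finrank K ↥(A ⊓ Afi)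
          = finrank K A + finrank K A := by
        rw [Submodule.finrank_sup_add_finrank_inf_eq, hrAfi]
      have hsumB : finrank K ↥(B ⊔ Bf) + finrank K ↥(B ⊓ Bf)
          = finrank K B + finrank K B := by
        rw [Submodule.finrank_sup_add_finrank_inf_eq, hrBf]
      have hstrictA : ¬(A ≤ Afi) := by
        intro hcon
        refine hf1 (stab_right htrans A (ne_bot_of_one_mem h1A) hAf ?_)
        intro x hx
        obtain ⟨a', ha', hx'⟩ := Submodule.mem_map.1 (hcon hx)
        rw [mreE_coe_apply] at hx'
        rw [← hx', inv_mul_cancel_right₀ hf0]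
        exact ha'
      have hstrictB : ¬(Bf ≤ B) := by
        intro hcon
        refine hf1 (stab_left htrans B (ne_bot_of_one_mem h1B) hBf ?_)
        intro x hx
        have := hcon (Submodule.mem_map_of_mem (f := (mleE K f hf0 : L →ₗ[K] L)) hx)
        simpa using this
      have hltA : finrank K ↥(A ⊓ Afi) < finrank K A :=
        Submodule.finrank_lt_finrank_of_lt
          (lt_of_le_of_ne inf_le_left (fun h => hstrictA (inf_eq_left.1 h)))
      have hltB : finrank K B < finrank K ↥(B ⊔ Bf) :=
        Submodule.finrank_lt_finrank_of_lt
          (lt_of_le_of_ne le_sup_left (fun h => hstrictB (sup_eq_left.1 h.symm)))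
      have h1A1 : (1 : L) ∈ A ⊓ Afi :=
        ⟨h1A, Submodule.mem_map.2 ⟨f, hfA, by
          rw [mreE_coe_apply]; exact mul_inv_cancel₀ hf0⟩⟩
      have h1B1 : (1 : L) ∈ B ⊔ Bf := Submodule.mem_sup_left h1B
      by_cases hM : finrank K A + finrank K B ≤ finrank K ↥(A ⊓ Afi) + finrank K ↥(B ⊔ Bf)
      · -- transform keeps total: recurse on smaller dim A
        have hprod : (A ⊓ Afi) * (B ⊔ Bf) ≤ A * B :=
          T_inf_sup A B (inv_ne_zero hf0) hf0 (inv_mul_cancel₀ hf0)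
        haveI : FiniteDimensional K ↥((A ⊓ Afi) * (B ⊔ Bf)) := fin_mul _ _
        have hrprod : finrank K ↥((A ⊓ Afi) * (B ⊔ Bf)) ≤ finrank K ↥(A * B) :=
          Submodule.finrank_mono hprod
        have hrec := IHa (finrank K ↥(A ⊓ Afi)) (by omega) (A ⊓ Afi) (B ⊔ Bf)
          h1A1 h1B1 inferInstance inferInstance rfl (by omega) (by omega)
        omega
      · push_neg at hM
        by_cases hbot : B ⊓ Bf = ⊥
        · exfalso
          have h0 : finrank K ↥(B ⊓ Bf) = 0 := by rw [hbot]; exact finrank_bot K L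
          omega
        · obtain ⟨b₀, hb₀, hb₀0⟩ := Submodule.exists_mem_ne_zero_of_ne_bot hbot
          set B2 := (B ⊓ Bf).map (mreE K b₀⁻¹ (inv_ne_zero hb₀0) : L →ₗ[K] L) with hB2def
          have h1B2 : (1 : L) ∈ B2 := Submodule.mem_map.2 ⟨b₀, hb₀, by
            rw [mreE_coe_apply]; exact mul_inv_cancel₀ hb₀0⟩
          have h1A2 : (1 : L) ∈ A ⊔ Afi := Submodule.mem_sup_left h1A
          haveI : FiniteDimensional K B2 := fin_map _ _
          have hrB2 : finrank K B2 = finrank K ↥(B ⊓ Bf) := LinearEquiv.finrank_map_eq _ _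
          have hp1 : (A ⊔ Afi) * B2 ≤
              ((A ⊔ Afi) * (B ⊓ Bf)).map (mreE K b₀⁻¹ (inv_ne_zero hb₀0) : L →ₗ[K] L) :=
            scale_right _ _ _
          have hp2 : (A ⊔ Afi) * (B ⊓ Bf) ≤ A * B :=
            T_sup_inf A B (inv_ne_zero hf0) hf0 (inv_mul_cancel₀ hf0)
          have hple : (A ⊔ Afi) * B2 ≤
              (A * B).map (mreE K b₀⁻¹ (inv_ne_zero hb₀0) : L →ₗ[K] L) :=
            le_trans hp1 (Submodule.map_mono hp2)
          haveI : FiniteDimensional K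
              ↥((A * B).map (mreE K b₀⁻¹ (inv_ne_zero hb₀0) : L →ₗ[K] L)) := fin_map _ _
          haveI : FiniteDimensional K ↥((A ⊔ Afi) * B2) := fin_mul _ _
          have hrp : finrank K ↥((A ⊔ Afi) * B2) ≤ finrank K ↥(A * B) := by
            have h1 := Submodule.finrank_mono (M := L) (R := K) hple
            have h2 : finrank K ↥((A * B).map
                (mreE K b₀⁻¹ (inv_ne_zero hb₀0) : L →ₗ[K] L)) = finrank K ↥(A * B) :=
              LinearEquiv.finrank_map_eq _ _
            omega
          have hτ : finrank K A + finrank K B <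
              finrank K ↥(A ⊔ Afi) + finrank K B2 := by omega
          have hAle : finrank K ↥(A ⊔ Afi) ≤ finrank K ↥((A ⊔ Afi) * B2) :=
            Submodule.finrank_mono (le_mul_right' _ _ h1B2)
          have hBle : finrank K B2 ≤ finrank K ↥((A ⊔ Afi) * B2) :=
            Submodule.finrank_mono (le_mul_left' _ _ h1A2)
          have hd1 : 1 ≤ d := by omega
          have hrec := IH (d - 1) (by omega) (A ⊔ Afi) B2 h1A2 h1B2
            inferInstance inferInstance (by omega)
          omega
  -- N phase : strong induction on dim B
  have Nph : ∀ n : ℕ, ∀ A B : Submodule K L, (1 : L) ∈ A → (1 : L) ∈ B →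
      FiniteDimensional K A → FiniteDimensional K B →
      finrank K B = n →
      2 * finrank K ↥(A * B) ≤ finrank K A + finrank K B + d →
      finrank K A + finrank K B ≤ finrank K ↥(A * B) + 1 := by
    intro n
    induction n using Nat.strong_induction_on with
    | _ n IHn =>
    intro A B h1A h1B hAf hBf hrn hd
    haveI := hAf; haveI := hBf
    haveI hABf : FiniteDimensional K ↥(A * B) := fin_mul A B
    have hr1 : finrank K (1 : Submodule K L) = 1 := by
      rw [Submodule.one_eq_span]; exact finrank_span_singleton (one_ne_zero (α := L))
    have hle1 : (1 : Submodule K L) ≤ B := by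
      rw [Submodule.one_eq_span]
      exact (Submodule.span_singleton_le_iff_mem _ _).2 h1B
    by_cases hB1 : finrank K B ≤ 1
    · -- base case: B = K
      have hBeq : (1 : Submodule K L) = B :=
        Submodule.eq_of_le_of_finrank_le hle1 (by omega)
      have h5 : A * B = A := by rw [← hBeq, mul_one]
      have h6 : 1 ≤ finrank K B := one_le_finrank h1B
      rw [h5]
      omega
    · push_neg at hB1
      have hlt1 : (1 : Submodule K L) < B := by
        refine lt_of_le_of_ne hle1 (fun h => ?_)
        rw [← h, hr1] at hB1
        omega
      obtain ⟨e, heB, he1⟩ := SetLike.exists_of_lt hlt1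
      have he0 : e ≠ 0 := fun h => he1 (by rw [h]; exact zero_mem _)
      set Ae := A.map (mreE K e he0 : L →ₗ[K] L) with hAedef
      set eiB := B.map (mleE K e⁻¹ (inv_ne_zero he0) : L →ₗ[K] L) with heiBdef
      haveI : FiniteDimensional K Ae := fin_map A _
      haveI : FiniteDimensional K eiB := fin_map B _
      haveI : FiniteDimensional K ↥(A ⊓ Ae) := Submodule.finiteDimensional_of_le inf_le_left
      haveI : FiniteDimensional K ↥(B ⊓ eiB) := Submodule.finiteDimensional_of_le inf_le_left
      haveI : FiniteDimensional K ↥(A ⊔ Ae) := Submodule.finiteDimensional_sup A Ae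
      haveI : FiniteDimensional K ↥(B ⊔ eiB) := Submodule.finiteDimensional_sup B eiB
      have hrAe : finrank K Ae = finrank K A := LinearEquiv.finrank_map_eq _ _
      have hriB : finrank K eiB = finrank K B := LinearEquiv.finrank_map_eq _ _
      have hsumA : finrank K ↥(A ⊔ Ae) + finrank K ↥(A ⊓ Ae)
          = finrank K A + finrank K A := by
        rw [Submodule.finrank_sup_add_finrank_inf_eq, hrAe]
      have hsumB : finrank K ↥(B ⊔ eiB) + finrank K ↥(B ⊓ eiB)
          = finrank K B + finrank K B := by
        rw [Submodule.finrank_sup_add_finrank_inf_eq, hriB]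
      have hstrA : ¬(Ae ≤ A) := by
        intro hcon
        refine he1 (stab_right htrans A (ne_bot_of_one_mem h1A) hAf ?_)
        intro x hx
        have := hcon (Submodule.mem_map_of_mem (f := (mreE K e he0 : L →ₗ[K] L)) hx)
        simpa using this
      have hstrB : ¬(B ≤ eiB) := by
        intro hcon
        refine he1 (stab_left htrans B (ne_bot_of_one_mem h1B) hBf ?_)
        intro x hx
        obtain ⟨b, hb, hb'⟩ := Submodule.mem_map.1 (hcon hx)
        rw [mleE_coe_apply] at hb'
        rw [← hb', mul_inv_cancel_left₀ he0]
        exact hb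
      have hltA : finrank K A < finrank K ↥(A ⊔ Ae) :=
        Submodule.finrank_lt_finrank_of_lt
          (lt_of_le_of_ne le_sup_left (fun h => hstrA (sup_eq_left.1 h.symm)))
      have hltB : finrank K ↥(B ⊓ eiB) < finrank K B :=
        Submodule.finrank_lt_finrank_of_lt
          (lt_of_le_of_ne inf_le_left (fun h => hstrB (inf_eq_left.1 h)))
      have h1B1 : (1 : L) ∈ B ⊓ eiB :=
        ⟨h1B, Submodule.mem_map.2 ⟨e, heB, by
          rw [mleE_coe_apply]; exact inv_mul_cancel₀ he0⟩⟩
      have h1A1 : (1 : L) ∈ A ⊔ Ae := Submodule.mem_sup_left h1A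
      by_cases hN : finrank K A + finrank K B ≤ finrank K ↥(A ⊔ Ae) + finrank K ↥(B ⊓ eiB)
      · -- transform keeps total: recurse on smaller dim B
        have hprod : (A ⊔ Ae) * (B ⊓ eiB) ≤ A * B :=
          T_sup_inf A B he0 (inv_ne_zero he0) (mul_inv_cancel₀ he0)
        haveI : FiniteDimensional K ↥((A ⊔ Ae) * (B ⊓ eiB)) := fin_mul _ _
        have hrprod : finrank K ↥((A ⊔ Ae) * (B ⊓ eiB)) ≤ finrank K ↥(A * B) :=
          Submodule.finrank_mono hprod
        have hrec := IHn (finrank K ↥(B ⊓ eiB)) (by omega) (A ⊔ Ae) (B ⊓ eiB)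
          h1A1 h1B1 inferInstance inferInstance rfl (by omega)
        omega
      · push_neg at hN
        by_cases hbot : A ⊓ Ae = ⊥
        · -- dim A < dim B : switch to the M phase
          have h0 : finrank K ↥(A ⊓ Ae) = 0 := by rw [hbot]; exact finrank_bot K L
          have h1B1' : 1 ≤ finrank K ↥(B ⊓ eiB) := one_le_finrank h1B1
          have hab : finrank K A < finrank K B := by omega
          exact Mph (finrank K A) A B h1A h1B hAf hBf rfl hab hd
        · obtain ⟨a₀, ha₀, ha₀0⟩ := Submodule.exists_mem_ne_zero_of_ne_bot hbot
          set A2 := (A ⊓ Ae).map (mleE K a₀⁻¹ (inv_ne_zero ha₀0) : L →ₗ[K] L) with hA2def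
          have h1A2 : (1 : L) ∈ A2 := Submodule.mem_map.2 ⟨a₀, ha₀, by
            rw [mleE_coe_apply]; exact inv_mul_cancel₀ ha₀0⟩
          have h1B2 : (1 : L) ∈ B ⊔ eiB := Submodule.mem_sup_left h1B
          haveI : FiniteDimensional K A2 := fin_map _ _
          have hrA2 : finrank K A2 = finrank K ↥(A ⊓ Ae) := LinearEquiv.finrank_map_eq _ _
          have hp1 : A2 * (B ⊔ eiB) ≤
              ((A ⊓ Ae) * (B ⊔ eiB)).map (mleE K a₀⁻¹ (inv_ne_zero ha₀0) : L →ₗ[K] L) :=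
            scale_left _ _ _
          have hp2 : (A ⊓ Ae) * (B ⊔ eiB) ≤ A * B :=
            T_inf_sup A B he0 (inv_ne_zero he0) (mul_inv_cancel₀ he0)
          have hple : A2 * (B ⊔ eiB) ≤
              (A * B).map (mleE K a₀⁻¹ (inv_ne_zero ha₀0) : L →ₗ[K] L) :=
            le_trans hp1 (Submodule.map_mono hp2)
          haveI : FiniteDimensional K
              ↥((A * B).map (mleE K a₀⁻¹ (inv_ne_zero ha₀0) : L →ₗ[K] L)) := fin_map _ _
          haveI : FiniteDimensional K ↥(A2 * (B ⊔ eiB)) := fin_mul _ _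
          have hrp : finrank K ↥(A2 * (B ⊔ eiB)) ≤ finrank K ↥(A * B) := by
            have h1 := Submodule.finrank_mono (M := L) (R := K) hple
            have h2 : finrank K ↥((A * B).map
                (mleE K a₀⁻¹ (inv_ne_zero ha₀0) : L →ₗ[K] L)) = finrank K ↥(A * B) :=
              LinearEquiv.finrank_map_eq _ _
            omega
          have hτ : finrank K A + finrank K B <
              finrank K A2 + finrank K ↥(B ⊔ eiB) := by omega
          have hAle : finrank K A2 ≤ finrank K ↥(A2 * (B ⊔ eiB)) :=
            Submodule.finrank_mono (le_mul_right' _ _ h1B2)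
          have hBle : finrank K ↥(B ⊔ eiB) ≤ finrank K ↥(A2 * (B ⊔ eiB)) :=
            Submodule.finrank_mono (le_mul_left' _ _ h1A2)
          have hd1 : 1 ≤ d := by omega
          have hrec := IH (d - 1) (by omega) A2 (B ⊔ eiB) h1A2 h1B2
            inferInstance inferInstance (by omega)
          omega
  intro A B h1A h1B hAf hBf hd
  exact Nph (finrank K B) A B h1A h1B hAf hBf rfl hd

end KempermanLinear

/-- Linear version of Kemperman's theorem for torsion-free groups:
if the only finite-dimensional subfield of `L` containing `K` is `K` itself
(e.g. `L` purely transcendental over `K`), then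
`dim ⟨AB⟩ ≥ dim A + dim B - 1`. -/
theorem stmt_6 {K L : Type*} [Field K] [DivisionRing L] [Algebra K L]
    (htrans : ∀ H : Submodule K L, (1 : L) ∈ H → (∀ a ∈ H, ∀ b ∈ H, a * b ∈ H) →
      FiniteDimensional K H → H = (1 : Submodule K L))
    (A B : Submodule K L) (hA : A ≠ ⊥) (hB : B ≠ ⊥)
    (hAfin : FiniteDimensional K A) (hBfin : FiniteDimensional K B) :
    Module.finrank K A + Module.finrank K B ≤ Module.finrank K ↥(A * B) + 1 := by
  classical
  obtain ⟨a₀, ha₀, ha₀0⟩ := Submodule.exists_mem_ne_zero_of_ne_bot hA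
  obtain ⟨b₀, hb₀, hb₀0⟩ := Submodule.exists_mem_ne_zero_of_ne_bot hB
  haveI := hAfin; haveI := hBfin
  set A' := A.map (mleE K a₀⁻¹ (inv_ne_zero ha₀0) : L →ₗ[K] L) with hA'def
  set B' := B.map (mreE K b₀⁻¹ (inv_ne_zero hb₀0) : L →ₗ[K] L) with hB'def
  have h1A' : (1 : L) ∈ A' := Submodule.mem_map.2 ⟨a₀, ha₀, by
    rw [mleE_coe_apply]; exact inv_mul_cancel₀ ha₀0⟩
  have h1B' : (1 : L) ∈ B' := Submodule.mem_map.2 ⟨b₀, hb₀, by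
    rw [mreE_coe_apply]; exact mul_inv_cancel₀ hb₀0⟩
  haveI : FiniteDimensional K A' := fin_map _ _
  haveI : FiniteDimensional K B' := fin_map _ _
  haveI : FiniteDimensional K ↥(A * B) := fin_mul A B
  haveI : FiniteDimensional K ↥(A' * B') := fin_mul A' B'
  have hrA' : Module.finrank K A' = Module.finrank K A := LinearEquiv.finrank_map_eq _ _
  have hrB' : Module.finrank K B' = Module.finrank K B := LinearEquiv.finrank_map_eq _ _
  -- A' * B' ≤ ((A * B) scaled on both sides)
  have hp1 : A' * B' ≤ (A * B').map (mleE K a₀⁻¹ (inv_ne_zero ha₀0) : L →ₗ[K] L) :=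
    scale_left _ _ _
  have hp2 : A * B' ≤ (A * B).map (mreE K b₀⁻¹ (inv_ne_zero hb₀0) : L →ₗ[K] L) :=
    scale_right _ _ _
  have hple : A' * B' ≤
      (((A * B).map (mreE K b₀⁻¹ (inv_ne_zero hb₀0) : L →ₗ[K] L)).map
        (mleE K a₀⁻¹ (inv_ne_zero ha₀0) : L →ₗ[K] L)) :=
    le_trans hp1 (Submodule.map_mono hp2)
  haveI : FiniteDimensional K
      ↥((A * B).map (mreE K b₀⁻¹ (inv_ne_zero hb₀0) : L →ₗ[K] L)) := fin_map _ _
  haveI : FiniteDimensional K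
      ↥(((A * B).map (mreE K b₀⁻¹ (inv_ne_zero hb₀0) : L →ₗ[K] L)).map
        (mleE K a₀⁻¹ (inv_ne_zero ha₀0) : L →ₗ[K] L)) := fin_map _ _
  have hrle : Module.finrank K ↥(A' * B') ≤ Module.finrank K ↥(A * B) := by
    have h1 := Submodule.finrank_mono (M := L) (R := K) hple
    have h2 : Module.finrank K
        ↥(((A * B).map (mreE K b₀⁻¹ (inv_ne_zero hb₀0) : L →ₗ[K] L)).map
          (mleE K a₀⁻¹ (inv_ne_zero ha₀0) : L →ₗ[K] L))
        = Module.finrank K ↥((A * B).map (mreE K b₀⁻¹ (inv_ne_zero hb₀0) : L →ₗ[K] L)) :=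
      LinearEquiv.finrank_map_eq _ _
    have h3 : Module.finrank K ↥((A * B).map (mreE K b₀⁻¹ (inv_ne_zero hb₀0) : L →ₗ[K] L))
        = Module.finrank K ↥(A * B) := LinearEquiv.finrank_map_eq _ _
    omega
  have hmain := kemperman_main htrans (2 * Module.finrank K ↥(A' * B')) A' B'
    h1A' h1B' inferInstance inferInstance (by omega)
  omega
end

section
/- Let K be a commutative field and L a field extension containing K in its center with dim_K L finite. If A, B are nonzero K-subspaces of L with dim_K A + dim_K B > dim_K L, then the K-span of AB equals L. -/
theorem stmt_8 {K L : Type*} [Field K] [DivisionRing L] [Algebra K L]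
    [FiniteDimensional K L]
    (A B : Submodule K L) (hA : A ≠ ⊥) (hB : B ≠ ⊥)
    (h : Module.finrank K L < Module.finrank K A + Module.finrank K B) :
    A * B = ⊤ := by
  by_contra hne
  -- pick x ∉ A*B
  have hlt : A * B < ⊤ := lt_top_iff_ne_top.mpr hne
  obtain ⟨x, -, hx⟩ := SetLike.exists_of_lt hlt
  -- a nonzero functional vanishing on A*B
  have hxq : (Submodule.Quotient.mk x : L ⧸ (A * B)) ≠ 0 := by
    simpa [Submodule.Quotient.mk_eq_zero] using hx
  obtain ⟨g, hg⟩ := not_forall.mp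
    ((not_iff_not.mpr (Module.forall_dual_apply_eq_zero_iff K
      (Submodule.Quotient.mk x : L ⧸ (A * B)))).mpr hxq)
  set f : L →ₗ[K] K := g.comp (A * B).mkQ with hf
  have hfv : ∀ z ∈ A * B, f z = 0 := by
    intro z hz
    simp [hf, (Submodule.Quotient.mk_eq_zero _).mpr hz]
  have hfne : ∃ z : L, f z ≠ 0 := by
    refine ⟨x, ?_⟩
    simpa [hf] using hg
  -- the map ψ : L → Dual, ψ y x = f (x * y), is injective
  set ψ : L →ₗ[K] Module.Dual K L := ((LinearMap.mul K L).compr₂ f).flip with hψ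
  have hψ_apply : ∀ y z : L, ψ y z = f (z * y) := fun _ _ => rfl
  have hinj : Function.Injective ψ := by
    rw [injective_iff_map_eq_zero]
    intro y hy
    by_contra hy0
    obtain ⟨z, hz⟩ := hfne
    have : ψ y (z * y⁻¹) = 0 := by rw [hy]; rfl
    rw [hψ_apply, mul_assoc, inv_mul_cancel₀ hy0, mul_one] at this
    exact hz this
  -- ψ maps B into the dual annihilator of A
  have hmap : B.map ψ ≤ A.dualAnnihilator := by
    rintro _ ⟨b, hb, rfl⟩
    rw [Submodule.mem_dualAnnihilator]
    intro a ha
    exact hfv _ (Submodule.mul_mem_mul ha hb)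
  have h1 : Module.finrank K B = Module.finrank K (B.map ψ) :=
    (Submodule.equivMapOfInjective ψ hinj B).finrank_eq
  have h2 : Module.finrank K (B.map ψ) ≤ Module.finrank K A.dualAnnihilator :=
    Submodule.finrank_mono hmap
  have h3 : Module.finrank K A + Module.finrank K A.dualAnnihilator
      = Module.finrank K L := by
    have e : Module.finrank K (L ⧸ A) = Module.finrank K A.dualAnnihilator :=
      LinearEquiv.finrank_eq (Subspace.quotEquivAnnihilator A)
    rw [← e, add_comm, Submodule.finrank_quotient_add_finrank]
  omega
end

section
/- Let K ⊆ L be a commutative field extension with dim_K L finite. If A, B are nonzero K-subspaces of L with dim_K A + dim_K B > dim_K L, then ⟨AB⟩ = L. -/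
theorem stmt_9 {K L : Type*} [Field K] [Field L] [Algebra K L]
    [FiniteDimensional K L]
    (A B : Submodule K L) (hA : A ≠ ⊥) (hB : B ≠ ⊥)
    (h : Module.finrank K L < Module.finrank K A + Module.finrank K B) :
    A * B = ⊤ := by
  by_contra hne
  have hlt : A * B < ⊤ := lt_top_iff_ne_top.mpr hne
  obtain ⟨f, hf0, hfmap⟩ := (A * B).exists_dual_map_eq_bot_of_lt_top hlt inferInstance
  have hker : ∀ x ∈ A * B, f x = 0 := by
    intro x hx
    have : f x ∈ (A * B).map f := Submodule.mem_map_of_mem hx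
    rwa [hfmap, Submodule.mem_bot] at this
  -- the map y ↦ (x ↦ f (y * x))
  let j : L →ₗ[K] Module.Dual K L :=
    (LinearMap.llcomp K L L K f).comp (LinearMap.mul K L)
  have hj : ∀ y x : L, j y x = f (y * x) := fun y x => rfl
  have hjinj : Function.Injective j := by
    rw [← LinearMap.ker_eq_bot, Submodule.eq_bot_iff]
    intro y hy
    by_contra hy0
    apply hf0
    ext z
    have h1 : f (y * (y⁻¹ * z)) = 0 := by
      have h2 := congrArg (fun g : Module.Dual K L => g (y⁻¹ * z)) (LinearMap.mem_ker.mp hy)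
      simpa [hj] using h2
    rw [← mul_assoc, mul_inv_cancel₀ hy0, one_mul] at h1
    simpa using h1
  have hjsurj : Function.Surjective j :=
    (LinearMap.injective_iff_surjective_of_finrank_eq_finrank
      (Subspace.dual_finrank_eq (K := K) (V := L)).symm).mp hjinj
  let T : L →ₗ[K] Module.Dual K A := (A.subtype.dualMap).comp j
  have hTsurj : Function.Surjective T :=
    (LinearMap.dualMap_surjective_of_injective A.injective_subtype).comp hjsurj
  have hBker : B ≤ LinearMap.ker T := by
    intro b hb
    rw [LinearMap.mem_ker]
    ext a
    have : (a : L) * b ∈ A * B := Submodule.mul_mem_mul a.2 hb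
    have hfab : f ((a : L) * b) = 0 := hker _ this
    simpa [T, hj, mul_comm] using hfab
  have hrk := LinearMap.finrank_range_add_finrank_ker T
  rw [LinearMap.range_eq_top.mpr hTsurj] at hrk
  have hA' : Module.finrank K (⊤ : Submodule K (Module.Dual K A)) = Module.finrank K A := by
    rw [finrank_top, Subspace.dual_finrank_eq]
  rw [hA'] at hrk
  have hBle : Module.finrank K B ≤ Module.finrank K (LinearMap.ker T) :=
    Submodule.finrank_mono hBker
  omega
end

section
/- Let K be a commutative field, H a field with K ⊆ H ⊆ L where L is a field extension, and let V be a nonzero finite-dimensional K-subspace of L with HV = V. Then dim_K H is finite and divides dim_K V; indeed V is a direct sum of finitely many subspaces of the form Hv with v ∈ V nonzero. -/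
open Pointwise

private theorem restrictScalars_iSup' {S R M : Type*} [Semiring R] [AddCommMonoid M]
    [Module R M] [Semiring S] [SMul S R] [Module S M] [IsScalarTower S R M] {ι : Sort*}
    (f : ι → Submodule R M) :
    (⨆ i, f i).restrictScalars S = ⨆ i, (f i).restrictScalars S :=
  map_iSup (Submodule.restrictScalarsLatticeHom S R M) f

private theorem iSupIndep_restrictScalars' {S R M : Type*} [Semiring R] [AddCommMonoid M]
    [Module R M] [Semiring S] [SMul S R] [Module S M] [IsScalarTower S R M] {ι : Type*}
    {f : ι → Submodule R M} (h : iSupIndep f) :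
    iSupIndep fun i => (f i).restrictScalars S := by
  intro i
  rw [Submodule.disjoint_def]
  intro x hx hx'
  have heq : (⨆ j, ⨆ _ : j ≠ i, (f j).restrictScalars S)
      = ((⨆ j, ⨆ _ : j ≠ i, f j).restrictScalars S) := by
    simp_rw [restrictScalars_iSup']
  rw [heq] at hx'
  exact Submodule.disjoint_def.mp (h i) x hx hx'

set_option maxHeartbeats 1000000 in
set_option synthInstance.maxHeartbeats 200000 in
theorem stmt_11 {K L : Type*} [Field K] [Field L] [Algebra K L]
    (H : IntermediateField K L) (V : Submodule K L) (hV : V ≠ ⊥)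
    (hVfin : FiniteDimensional K V)
    (hHV : (H : Set L) * (V : Set L) = (V : Set L)) :
    FiniteDimensional K H ∧ Module.finrank K H ∣ Module.finrank K V ∧
      ∃ R : Finset L, (∀ v ∈ R, v ∈ V ∧ v ≠ 0) ∧
        iSupIndep (fun v : R =>
          (Subalgebra.toSubmodule H.toSubalgebra).map (LinearMap.mulRight K (v : L))) ∧
        (⨆ v : R, (Subalgebra.toSubmodule H.toSubalgebra).map
          (LinearMap.mulRight K (v : L))) = V := by
  classical
  -- H * V ⊆ V
  have hmul : ∀ (h : H) (x : L), x ∈ V → (h : L) * x ∈ V := by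
    intro h x hx
    have : (h : L) * x ∈ (H : Set L) * (V : Set L) := Set.mul_mem_mul h.2 hx
    rwa [hHV] at this
  -- V as an H-submodule of L
  let W : Submodule H L :=
    { carrier := (V : Set L)
      add_mem' := fun ha hb => V.add_mem ha hb
      zero_mem' := V.zero_mem
      smul_mem' := fun h x hx => by
        have : (h : L) * x ∈ V := hmul h x hx
        simpa [Algebra.smul_def] using this }
  have hWV : W.restrictScalars K = V := by ext x; rfl
  -- FiniteDimensional K H
  obtain ⟨v₀, hv₀V, hv₀⟩ := Submodule.exists_mem_ne_zero_of_ne_bot hV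
  have hfH : FiniteDimensional K H := by
    let f : H →ₗ[K] V :=
      LinearMap.codRestrict V ((LinearMap.mulRight K v₀).comp H.val.toLinearMap)
        (fun h => hmul h v₀ hv₀V)
    have hfinj : Function.Injective f := by
      intro a b hab
      have : (a : L) * v₀ = (b : L) * v₀ := congrArg Subtype.val hab
      exact Subtype.ext (mul_right_cancel₀ hv₀ this)
    exact FiniteDimensional.of_injective f hfinj
  -- W is finite dimensional over K, hence over H
  let eVW : V ≃ₗ[K] W :=
    { toFun := fun x => ⟨x.1, x.2⟩
      invFun := fun x => ⟨x.1, x.2⟩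
      map_add' := fun _ _ => rfl
      map_smul' := fun _ _ => rfl
      left_inv := fun _ => rfl
      right_inv := fun _ => rfl }
  have hfKW : FiniteDimensional K W := Module.Finite.equiv eVW
  have hfHW : FiniteDimensional H W := Module.Finite.of_restrictScalars_finite K H W
  refine ⟨hfH, ?_, ?_⟩
  · refine ⟨Module.finrank H W, ?_⟩
    rw [Module.finrank_mul_finrank K H W, eVW.finrank_eq]
  -- basis of W over H
  · set n := Module.finrank H W with hn
    let b : Module.Basis (Fin n) H W := Module.finBasis H W
    let c : Fin n → L := fun i => ((b i : W) : L)
    have hcli : LinearIndependent H c :=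
      b.linearIndependent.map' W.subtype (Submodule.ker_subtype W)
    have hcinj : Function.Injective c :=
      W.injective_subtype.comp b.injective
    have hcV : ∀ i, c i ∈ V := fun i => (b i).2
    have hc0 : ∀ i, c i ≠ 0 := by
      intro i h
      exact b.ne_zero i (Subtype.ext h)
    -- the submodules
    set N : L → Submodule K L :=
      fun x => (Subalgebra.toSubmodule H.toSubalgebra).map (LinearMap.mulRight K x) with hN
    have hNx : ∀ x : L, N x = (Submodule.span H {x}).restrictScalars K := by
      intro x
      ext y
      simp only [hN, Submodule.mem_map, Subalgebra.mem_toSubmodule,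
        Submodule.restrictScalars_mem, Submodule.mem_span_singleton,
        LinearMap.mulRight_apply]
      simp only [IntermediateField.smul_def, smul_eq_mul]
      constructor
      · rintro ⟨h, hh, rfl⟩
        exact ⟨⟨h, hh⟩, rfl⟩
      · rintro ⟨h, rfl⟩
        exact ⟨(h : L), h.2, rfl⟩
    -- independence over Fin n
    have hindepH : iSupIndep fun i : Fin n => Submodule.span H {c i} :=
      hcli.iSupIndep_span_singleton
    have hindepK : iSupIndep fun i : Fin n => N (c i) := by
      have := iSupIndep_restrictScalars' (S := K) hindepH
      simpa only [← hNx] using this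
    -- sup over Fin n
    have hsup : (⨆ i : Fin n, N (c i)) = V := by
      have h1 : (⨆ i : Fin n, Submodule.span H {c i}) = W := by
        rw [← Submodule.span_iUnion]
        have : (⋃ i, ({c i} : Set L)) = Set.range c := by
          ext z; simp [eq_comm]
        rw [this]
        have : Set.range c = W.subtype '' Set.range b := by
          rw [← Set.range_comp]; rfl
        rw [this, Submodule.span_image, b.span_eq, Submodule.map_top,
          Submodule.range_subtype]
      calc (⨆ i : Fin n, N (c i))
          = ⨆ i : Fin n, (Submodule.span H {c i}).restrictScalars K := by
            simp_rw [hNx]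
        _ = (⨆ i : Fin n, Submodule.span H {c i}).restrictScalars K :=
            (restrictScalars_iSup' _).symm
        _ = W.restrictScalars K := by rw [h1]
        _ = V := hWV
    -- the finset
    set R : Finset L := Finset.image c Finset.univ with hR
    have hmemR : ∀ i, c i ∈ R := fun i => Finset.mem_image_of_mem c (Finset.mem_univ i)
    let g : Fin n → R := fun i => ⟨c i, hmemR i⟩
    have hginj : Function.Injective g := by
      intro a b hab
      have h2 : (g a : L) = (g b : L) := congrArg Subtype.val hab
      exact hcinj h2
    have hgsurj : Function.Surjective g := by
      intro v
      obtain ⟨i, _, hiv⟩ := Finset.mem_image.mp v.2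
      exact ⟨i, Subtype.ext hiv⟩
    let e : Fin n ≃ R := Equiv.ofBijective g ⟨hginj, hgsurj⟩
    refine ⟨R, ?_, ?_, ?_⟩
    · intro v hv
      obtain ⟨i, _, rfl⟩ := Finset.mem_image.mp hv
      exact ⟨hcV i, hc0 i⟩
    · exact iSupIndep.comp' (f := e) hindepK e.surjective
    · rw [← e.iSup_comp]; exact hsup
end

section
/- Let K be a commutative field, L a field extension containing K in its center, and B a finite-dimensional K-subspace of L with 1 ∈ B. For n ≥ 1, the following are equivalent: (1) ⟨B^{n+1}⟩ = ⟨B^n⟩; (2) ⟨B^{2n}⟩ = ⟨B^n⟩; (3) ⟨B^n⟩ is a subfield of L. -/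
theorem stmt_13 {K L : Type*} [Field K] [DivisionRing L] [Algebra K L]
    (B : Submodule K L) (hB : FiniteDimensional K B) (h1 : (1 : L) ∈ B)
    (n : ℕ) (hn : 1 ≤ n) :
    List.TFAE [B ^ (n + 1) = B ^ n,
               B ^ (2 * n) = B ^ n,
               (1 : L) ∈ B ^ n ∧ (∀ a ∈ B ^ n, ∀ b ∈ B ^ n, a * b ∈ B ^ n) ∧
                 (∀ a ∈ B ^ n, a ≠ 0 → a⁻¹ ∈ B ^ n)] := by
  -- ascending chain
  have hstep : ∀ m : ℕ, B ^ m ≤ B ^ (m + 1) := by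
    intro m x hx
    rw [pow_succ]
    simpa using Submodule.mul_mem_mul hx h1
  have hmono : ∀ m k : ℕ, m ≤ k → B ^ m ≤ B ^ k := by
    intro m k hmk
    induction k with
    | zero => simpa [Nat.le_zero.mp hmk]
    | succ k ih =>
      rcases Nat.lt_or_ge m (k + 1) with h | h
      · exact le_trans (ih (Nat.lt_succ_iff.mp h)) (hstep k)
      · have : m = k + 1 := le_antisymm hmk h
        simp [this]
  have hone : (1 : L) ∈ B ^ n := hmono 1 n hn (by simpa using h1)
  tfae_have 1 → 2
  · intro h
    have key : ∀ k : ℕ, B ^ (n + k) = B ^ n := by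
      intro k
      induction k with
      | zero => rfl
      | succ k ih =>
        calc B ^ (n + (k + 1)) = B ^ (n + k) * B := by rw [← pow_succ, Nat.add_assoc]
        _ = B ^ n * B := by rw [ih]
        _ = B ^ (n + 1) := (pow_succ B n).symm
        _ = B ^ n := h
    have := key n
    rwa [two_mul]
  tfae_have 2 → 3
  · intro h
    have hmul : ∀ a ∈ B ^ n, ∀ b ∈ B ^ n, a * b ∈ B ^ n := by
      intro a ha b hb
      have : a * b ∈ B ^ n * B ^ n := Submodule.mul_mem_mul ha hb
      rwa [← pow_add, ← two_mul, h] at this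
    refine ⟨hone, hmul, ?_⟩
    intro a ha ha0
    -- finite dimensionality of B ^ n
    have hfg : (B ^ n).FG := (Submodule.FG.pow ((Submodule.fg_iff_finiteDimensional B).mpr hB) n)
    have hfd : FiniteDimensional K ↥(B ^ n) := (Submodule.fg_iff_finiteDimensional _).mp hfg
    -- left multiplication by a
    let f : ↥(B ^ n) →ₗ[K] ↥(B ^ n) :=
      { toFun := fun x => ⟨a * x.1, hmul a ha x.1 x.2⟩
        map_add' := by intro x y; ext; simp [mul_add]
        map_smul' := by intro c x; ext; simp [mul_smul_comm] }
    have hinj : Function.Injective f := by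
      intro x y hxy
      have : a * x.1 = a * y.1 := congrArg Subtype.val hxy
      exact Subtype.ext (mul_left_cancel₀ ha0 this)
    have hsurj : Function.Surjective f := (LinearMap.injective_iff_surjective).mp hinj
    obtain ⟨x, hx⟩ := hsurj ⟨1, hone⟩
    have hx1 : a * x.1 = 1 := congrArg Subtype.val hx
    have : a⁻¹ = x.1 := inv_eq_of_mul_eq_one_right hx1
    rw [this]
    exact x.2
  tfae_have 3 → 1
  · rintro ⟨-, hmul, -⟩
    refine le_antisymm ?_ (hstep n)
    rw [pow_succ]
    refine Submodule.mul_le.mpr ?_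
    intro a ha b hb
    exact hmul a ha b (hmono 1 n hn (by simpa using hb))
  tfae_finish
end

section
/- Let K ⊆ L be a finite separable commutative field extension, and let B be a K-subspace of L containing 1 such that ⟨B^{n−1}⟩ ≠ ⟨B^n⟩ for a given n ≥ 2 (i.e., the chain of powers strictly increases up to step n). If moreover the conclusion of the linearized Olson bound holds at each step (⟨B^{k+1}⟩ = ⟨B^k⟩ or dim⟨B^{k+1}⟩ ≥ dim⟨B^{k−1}⟩ + dim B), then the smallest n ≥ 1 with ⟨B^n⟩ a field satisfies n ≤ 2·dim_K L / dim_K B. -/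
/-- The smallest `n ≥ 1` such that `⟨Bⁿ⟩` is a subfield of `L` satisfies
`n ≤ 2 dim_K L / dim_K B`, for a finite separable extension `K ⊆ L`
and a subspace `B` containing `1`, assuming the linearized Olson step
inequality at each step. -/
theorem stmt_18 {K L : Type*} [Field K] [Field L] [Algebra K L]
    [FiniteDimensional K L] [Algebra.IsSeparable K L]
    (B : Submodule K L) (h1 : (1 : L) ∈ B)
    (hstep : ∀ k : ℕ, 1 ≤ k →
      B ^ (k + 1) = B ^ k ∨
        Module.finrank K ↥(B ^ (k - 1)) + Module.finrank K B ≤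
          Module.finrank K ↥(B ^ (k + 1)))
    (n : ℕ) (hn : 1 ≤ n)
    (hfield : (∀ a ∈ B ^ n, ∀ b ∈ B ^ n, a * b ∈ B ^ n) ∧
      (∀ a ∈ B ^ n, a ≠ 0 → a⁻¹ ∈ B ^ n))
    (hmin : ∀ m : ℕ, 1 ≤ m →
      ((∀ a ∈ B ^ m, ∀ b ∈ B ^ m, a * b ∈ B ^ m) ∧
        (∀ a ∈ B ^ m, a ≠ 0 → a⁻¹ ∈ B ^ m)) → n ≤ m) :
    n ≤ 2 * Module.finrank K L / Module.finrank K B := by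
  classical
  -- 1 ∈ B^k for all k
  have hone : ∀ k : ℕ, (1 : L) ∈ B ^ k := by
    intro k
    induction k with
    | zero => simp [Submodule.one_eq_span]
    | succ k ih =>
      have : (1 : L) * 1 ∈ B ^ k * B := Submodule.mul_mem_mul ih h1
      simpa [pow_succ] using this
  -- d ≥ 1
  have hd1 : 1 ≤ Module.finrank K B := by
    rw [Nat.one_le_iff_ne_zero]
    intro h0
    have hB : B = ⊥ := Submodule.finrank_eq_zero.mp h0
    rw [hB] at h1
    simp at h1
  -- strict increase below n
  have hne : ∀ k : ℕ, 1 ≤ k → k < n → B ^ (k + 1) ≠ B ^ k := by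
    intro k hk1 hkn heq
    have hstab : ∀ j : ℕ, B ^ (k + j) = B ^ k := by
      intro j
      induction j with
      | zero => rfl
      | succ j ih =>
        calc B ^ (k + (j + 1)) = B ^ (k + j) * B := by rw [← pow_succ, Nat.add_assoc]
        _ = B ^ k * B := by rw [ih]
        _ = B ^ (k + 1) := (pow_succ B k).symm
        _ = B ^ k := heq
    have hmul : ∀ a ∈ B ^ k, ∀ b ∈ B ^ k, a * b ∈ B ^ k := by
      intro a ha b hb
      have hab : a * b ∈ B ^ k * B ^ k := Submodule.mul_mem_mul ha hb
      rw [← pow_add, hstab k] at hab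
      exact hab
    set S : Subalgebra K L := (B ^ k).toSubalgebra (hone k)
      (fun a b ha hb => hmul a ha b hb) with hS
    have hinv : ∀ a ∈ B ^ k, a ≠ 0 → a⁻¹ ∈ B ^ k := by
      intro a ha ha0
      have : Algebra.IsAlgebraic K L := Algebra.IsAlgebraic.of_finite K L
      exact S.inv_mem_of_algebraic
        (x := ⟨a, ha⟩) (Algebra.IsAlgebraic.isAlgebraic (a : L))
    have := hmin k hk1 ⟨hmul, hinv⟩
    omega
  -- dimension growth
  have hgrow : ∀ m : ℕ, m ≤ n →
      Module.finrank K B * ((m + 1) / 2) ≤ Module.finrank K ↥(B ^ m) := by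
    intro m
    induction m using Nat.strong_induction_on with
    | _ m ih =>
      intro hmn
      match m, hmn with
      | 0, _ => simp
      | 1, _ =>
        have e : B ^ 1 = B := pow_one B
        rw [e]
        simp
      | (k + 2), hmn =>
        have hk1 : 1 ≤ k + 1 := by omega
        have hkn : k + 1 < n := by omega
        rcases hstep (k + 1) hk1 with h | h
        · exact absurd h (hne (k + 1) hk1 hkn)
        · have e1 : k + 1 - 1 = k := rfl
          have e2 : k + 1 + 1 = k + 2 := rfl
          rw [e1, e2] at h
          have hprev := ih k (by omega) (by omega)
          have harith : Module.finrank K B * ((k + 2 + 1) / 2) ≤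
              Module.finrank K B * ((k + 1) / 2) + Module.finrank K B := by
            have h2 : (k + 2 + 1) / 2 ≤ (k + 1) / 2 + 1 := by omega
            calc Module.finrank K B * ((k + 2 + 1) / 2)
                ≤ Module.finrank K B * ((k + 1) / 2 + 1) :=
              Nat.mul_le_mul_left _ h2
            _ = Module.finrank K B * ((k + 1) / 2) + Module.finrank K B := by ring
          omega
  have hnn := hgrow n (le_refl n)
  have hle : Module.finrank K ↥(B ^ n) ≤ Module.finrank K L := Submodule.finrank_le _
  have key : n * Module.finrank K B ≤ 2 * Module.finrank K L := by
    have h2 : n ≤ 2 * ((n + 1) / 2) := by omega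
    calc n * Module.finrank K B ≤ 2 * ((n + 1) / 2) * Module.finrank K B :=
      Nat.mul_le_mul_right _ h2
    _ = 2 * (Module.finrank K B * ((n + 1) / 2)) := by ring
    _ ≤ 2 * Module.finrank K ↥(B ^ n) := Nat.mul_le_mul_left 2 hnn
    _ ≤ 2 * Module.finrank K L := Nat.mul_le_mul_left 2 hle
  rw [Nat.le_div_iff_mul_le (by omega : 0 < Module.finrank K B)]
  exact key
end

section
/- Let K be a commutative field, L a commutative field extension of K, and B a finite-dimensional K-subspace of L containing 1. Then ⟨B^{n+1}⟩ = ⟨B^n⟩ if and only if ⟨B^n b⟩ = ⟨B^{n+1}⟩ for every nonzero b ∈ B. -/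
theorem stmt_19 {K L : Type*} [Field K] [Field L] [Algebra K L]
    (B : Submodule K L) (hB : FiniteDimensional K B) (h1 : (1 : L) ∈ B) (n : ℕ) :
    B ^ (n + 1) = B ^ n ↔
      ∀ b ∈ B, b ≠ 0 → (B ^ n).map (LinearMap.mulRight K b) = B ^ (n + 1) := by
  constructor
  · intro h b hb hb0
    have hfgB : B.FG := (Submodule.fg_iff_finiteDimensional B).mpr hB
    have hfg : (B ^ n).FG := hfgB.pow n
    have hfd : FiniteDimensional K ↥(B ^ n) :=
      (Submodule.fg_iff_finiteDimensional _).mp hfg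
    have hfd' : FiniteDimensional K ↥(B ^ (n + 1)) := by rw [h]; exact hfd
    have hle : (B ^ n).map (LinearMap.mulRight K b) ≤ B ^ (n + 1) := by
      rintro _ ⟨x, hx, rfl⟩
      simp only [LinearMap.mulRight_apply]
      exact pow_succ B n ▸ Submodule.mul_mem_mul hx hb
    have hinj : Function.Injective (LinearMap.mulRight K b) :=
      mul_left_injective₀ hb0
    have hrank : Module.finrank K ((B ^ n).map (LinearMap.mulRight K b))
        = Module.finrank K ↥(B ^ n) :=
      ((Submodule.equivMapOfInjective _ hinj _).symm).finrank_eq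
    refine Submodule.eq_of_le_of_finrank_le hle ?_
    rw [hrank, h]
  · intro h
    have h1' := h 1 h1 one_ne_zero
    rw [LinearMap.mulRight_one, Submodule.map_id] at h1'
    exact h1'.symm
end
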